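/- The inequality Σ_{k=0}^{∞} N_k·2^{−(d+1)k} ≤ 4 + (1/C)·Σ_{k=0}^{∞} (I_k^+ − I_k^−) holds (as an inequality in [0,∞]). (This underlies part 2 of Theorem 3: the expected number of uses of the sup/inf oracle is at most 4C + 𝒜(f), where 𝒜(f) = Σ_{k=0}^{∞} (I_k^+ − I_k^−).) -/

import Mathlib

/-- The dyadic cube `R* = ∏_i [m_i·2^{-k}, (m_i+1)·2^{-k}]` of the level-`k` grid. -/
def dyadicCube (d k : ℕ) (m : Fin d → ℕ) : Set (Fin d → ℝ) :=
  {x | ∀ i, (m i : ℝ) / 2 ^ k ≤ x i ∧ x i ≤ ((m i : ℝ) + 1) / 2 ^ k}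

/-- The level-`k` cell `R* × [j·C·2^{-k}, (j+1)·C·2^{-k}]` is visited by `f` if
`sup_{R*} f ≥ j·C·2^{-k}` and `inf_{R*} f ≤ (j+1)·C·2^{-k}`. -/
def VisitedCell (d k : ℕ) (C : ℝ) (f : (Fin d → ℝ) → ℝ) (m : Fin d → ℕ) (j : ℕ) : Prop :=
  (j : ℝ) * C / 2 ^ k ≤ sSup (f '' dyadicCube d k m) ∧
    sInf (f '' dyadicCube d k m) ≤ ((j : ℝ) + 1) * C / 2 ^ k

/-- `N_k`, the number of level-`k` cells visited by `f`. -/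
noncomputable def Nvisited (d : ℕ) (C : ℝ) (f : (Fin d → ℝ) → ℝ) (k : ℕ) : ℕ :=
  {p : (Fin d → ℕ) × ℕ |
    (∀ i, p.1 i < 2 ^ k) ∧ p.2 < 2 ^ k ∧ VisitedCell d k C f p.1 p.2}.ncard

/-- The upper dyadic Darboux sum `I_k^+ = 2^{-dk} Σ_{R*} sup_{R*} f`. -/
noncomputable def Iplus (d : ℕ) (f : (Fin d → ℝ) → ℝ) (k : ℕ) : ℝ :=
  ((2 : ℝ) ^ (d * k))⁻¹ *
    ∑ m ∈ Fintype.piFinset (fun _ : Fin d => Finset.range (2 ^ k)),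
      sSup (f '' dyadicCube d k m)

/-- The lower dyadic Darboux sum `I_k^- = 2^{-dk} Σ_{R*} inf_{R*} f`. -/
noncomputable def Iminus (d : ℕ) (f : (Fin d → ℝ) → ℝ) (k : ℕ) : ℝ :=
  ((2 : ℝ) ^ (d * k))⁻¹ *
    ∑ m ∈ Fintype.piFinset (fun _ : Fin d => Finset.range (2 ^ k)),
      sInf (f '' dyadicCube d k m)

lemma cube_nonempty (d k : ℕ) (m : Fin d → ℕ) : (dyadicCube d k m).Nonempty :=
  ⟨fun i => (m i : ℝ) / 2 ^ k, fun i =>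
    ⟨le_refl _, by
      have h2 : (0:ℝ) < 2 ^ k := by positivity
      exact div_le_div_of_nonneg_right (by linarith) h2.le⟩⟩

lemma cube_subset (d k : ℕ) (m : Fin d → ℕ) (hm : ∀ i, m i < 2 ^ k) :
    dyadicCube d k m ⊆ Set.Icc (0 : Fin d → ℝ) 1 := by
  intro x hx
  constructor <;> intro i
  · have h0 : (0:ℝ) ≤ (m i : ℝ) / 2 ^ k := by positivity
    simpa using le_trans h0 (hx i).1
  · have h2 : (0:ℝ) < 2 ^ k := by positivity
    have hmi : ((m i : ℝ) + 1) ≤ 2 ^ k := by exact_mod_cast Nat.succ_le_of_lt (hm i)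
    calc x i ≤ ((m i : ℝ) + 1) / 2 ^ k := (hx i).2
      _ ≤ 2 ^ k / 2 ^ k := by gcongr
      _ = 1 := div_self (ne_of_gt h2)

lemma sInf_le_sSup_cube (d k : ℕ) (C : ℝ) (f : (Fin d → ℝ) → ℝ)
    (hf : ∀ x ∈ Set.Icc (0 : Fin d → ℝ) 1, f x ∈ Set.Icc 0 C)
    (m : Fin d → ℕ) (hm : ∀ i, m i < 2 ^ k) :
    sInf (f '' dyadicCube d k m) ≤ sSup (f '' dyadicCube d k m) := by
  have hsub := cube_subset d k m hm
  have hne : (f '' dyadicCube d k m).Nonempty := (cube_nonempty d k m).image f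
  have hbb : BddBelow (f '' dyadicCube d k m) :=
    ⟨0, fun y ⟨x, hx, hxy⟩ => hxy ▸ (hf x (hsub hx)).1⟩
  have hba : BddAbove (f '' dyadicCube d k m) :=
    ⟨C, fun y ⟨x, hx, hxy⟩ => hxy ▸ (hf x (hsub hx)).2⟩
  exact csInf_le_csSup hne hbb hba

open Finset in
lemma count_bound (k : ℕ) (C S I : ℝ) (hC : 0 < C) (hSI : I ≤ S) :
    (((Finset.range (2 ^ k)).filter
        (fun j : ℕ => (j : ℝ) * C / 2 ^ k ≤ S ∧ I ≤ ((j : ℝ) + 1) * C / 2 ^ k)).card : ℝ)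
      ≤ (S - I) * 2 ^ k / C + 2 := by
  classical
  set T := (Finset.range (2 ^ k)).filter
      (fun j : ℕ => (j : ℝ) * C / 2 ^ k ≤ S ∧ I ≤ ((j : ℝ) + 1) * C / 2 ^ k) with hT
  have h2 : (0:ℝ) < 2 ^ k := by positivity
  rcases T.eq_empty_or_nonempty with h | h
  · rw [h]
    simp only [Finset.card_empty, Nat.cast_zero]
    have h3 : (0:ℝ) ≤ (S - I) * 2 ^ k / C := div_nonneg (mul_nonneg (by linarith) h2.le) hC.le
    linarith
  · set a := T.min' h with ha
    set b := T.max' h with hbdef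
    have hab : a ≤ b := T.min'_le b (T.max'_mem h)
    have hsub : T ⊆ Finset.Icc a b := fun x hx => Finset.mem_Icc.mpr ⟨T.min'_le x hx, T.le_max' x hx⟩
    have hcard : T.card ≤ b + 1 - a := by
      simpa [Nat.card_Icc] using Finset.card_le_card hsub
    have hcardR : (T.card : ℝ) ≤ (b : ℝ) - a + 1 := by
      have h1 : (T.card : ℝ) ≤ ((b + 1 - a : ℕ) : ℝ) := by exact_mod_cast hcard
      rw [Nat.cast_sub (by omega)] at h1
      push_cast at h1 ⊢
      linarith
    have hbmem := (Finset.mem_filter.mp (T.max'_mem h)).2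
    have hamem := (Finset.mem_filter.mp (T.min'_mem h)).2
    have hb' : (b : ℝ) * C ≤ S * 2 ^ k := (div_le_iff₀ h2).mp hbmem.1
    have ha' : I * 2 ^ k ≤ ((a : ℝ) + 1) * C := (le_div_iff₀ h2).mp hamem.2
    have key : (T.card : ℝ) * C ≤ (S - I) * 2 ^ k + 2 * C := by
      nlinarith [mul_le_mul_of_nonneg_right hcardR hC.le]
    calc (T.card : ℝ) ≤ ((S - I) * 2 ^ k + 2 * C) / C := by rw [le_div_iff₀ hC]; linarith
      _ = (S - I) * 2 ^ k / C + 2 := by field_simp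

lemma gap_eq (d : ℕ) (f : (Fin d → ℝ) → ℝ) (k : ℕ) :
    (2:ℝ) ^ (d * k) * (Iplus d f k - Iminus d f k) =
      ∑ m ∈ Fintype.piFinset (fun _ : Fin d => Finset.range (2 ^ k)),
        (sSup (f '' dyadicCube d k m) - sInf (f '' dyadicCube d k m)) := by
  rw [Iplus, Iminus, ← mul_sub, ← Finset.sum_sub_distrib, ← mul_assoc,
    mul_inv_cancel₀ (by positivity), one_mul]

lemma Nk_real_bound (d k : ℕ) (C : ℝ) (hC : 0 < C) (f : (Fin d → ℝ) → ℝ)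
    (hf : ∀ x ∈ Set.Icc (0 : Fin d → ℝ) 1, f x ∈ Set.Icc 0 C) :
    (Nvisited d C f k : ℝ) ≤
      2 * 2 ^ (d * k) + 2 ^ k / C * (2 ^ (d * k) * (Iplus d f k - Iminus d f k)) := by
  classical
  set A := Fintype.piFinset (fun _ : Fin d => Finset.range (2 ^ k)) with hA
  set s := (A ×ˢ Finset.range (2 ^ k)).filter (fun p => VisitedCell d k C f p.1 p.2) with hs
  have hset : {p : (Fin d → ℕ) × ℕ |
      (∀ i, p.1 i < 2 ^ k) ∧ p.2 < 2 ^ k ∧ VisitedCell d k C f p.1 p.2} = ↑s := by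
    ext p
    simp only [hs, hA, Set.mem_setOf_eq, Finset.coe_filter, Finset.mem_product,
      Fintype.mem_piFinset, Finset.mem_range]
    tauto
  have hN : Nvisited d C f k = s.card := by
    rw [Nvisited, hset, Set.ncard_coe_finset]
  have hsplit : s.card = ∑ m ∈ A,
      ((Finset.range (2 ^ k)).filter (fun j : ℕ => VisitedCell d k C f m j)).card := by
    rw [hs, Finset.card_filter, Finset.sum_product]
    exact Finset.sum_congr rfl fun m _ => (Finset.card_filter _ _).symm
  have hterm : ∀ m ∈ A,
      (((Finset.range (2 ^ k)).filter (fun j : ℕ => VisitedCell d k C f m j)).card : ℝ) ≤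
        (sSup (f '' dyadicCube d k m) - sInf (f '' dyadicCube d k m)) * 2 ^ k / C + 2 := by
    intro m hm
    have hm' : ∀ i, m i < 2 ^ k := by
      intro i
      have := Fintype.mem_piFinset.mp hm i
      simpa using this
    have hSI := sInf_le_sSup_cube d k C f hf m hm'
    have := count_bound k C (sSup (f '' dyadicCube d k m)) (sInf (f '' dyadicCube d k m)) hC hSI
    convert this using 3
    exact Finset.filter_congr fun x _ => by simp [VisitedCell]
  have hcardA : (A.card : ℝ) = 2 ^ (d * k) := by
    rw [hA, Fintype.card_piFinset]
    simp [Finset.card_range, ← pow_mul, mul_comm k d]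
  calc (Nvisited d C f k : ℝ)
      = ∑ m ∈ A, (((Finset.range (2 ^ k)).filter
          (fun j : ℕ => VisitedCell d k C f m j)).card : ℝ) := by
        rw [hN, hsplit]; push_cast; ring
    _ ≤ ∑ m ∈ A, ((sSup (f '' dyadicCube d k m) - sInf (f '' dyadicCube d k m)) * 2 ^ k / C + 2) :=
        Finset.sum_le_sum hterm
    _ = 2 ^ k / C * (2 ^ (d * k) * (Iplus d f k - Iminus d f k)) + 2 * 2 ^ (d * k) := by
        rw [Finset.sum_add_distrib, Finset.sum_const, gap_eq, ← Finset.sum_div,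
          ← Finset.sum_mul, nsmul_eq_mul, hcardA]
        ring
    _ = 2 * 2 ^ (d * k) + 2 ^ k / C * (2 ^ (d * k) * (Iplus d f k - Iminus d f k)) := by ring

open scoped ENNReal

/-- behind Theorem 3, part 2: as an inequality in `[0,∞]`,
`Σ_k N_k·2^{-(d+1)k} ≤ 4 + (1/C)·Σ_k (I_k^+ - I_k^-)`. -/
theorem stmt10 (d : ℕ) (hd : 1 ≤ d) (C : ℝ) (hC : 0 < C)
    (f : (Fin d → ℝ) → ℝ)
    (hf : ∀ x ∈ Set.Icc (0 : Fin d → ℝ) 1, f x ∈ Set.Icc 0 C) :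
    ∑' k : ℕ, (Nvisited d C f k : ℝ≥0∞) / 2 ^ ((d + 1) * k) ≤
      4 + ENNReal.ofReal (1 / C) *
        ∑' k : ℕ, ENNReal.ofReal (Iplus d f k - Iminus d f k) := by
  have hgap : ∀ k, 0 ≤ Iplus d f k - Iminus d f k := by
    intro k
    have h1 : (0:ℝ) ≤ 2 ^ (d * k) * (Iplus d f k - Iminus d f k) := by
      rw [gap_eq]
      apply Finset.sum_nonneg
      intro m hm
      have hm' : ∀ i, m i < 2 ^ k := by
        intro i; simpa using Fintype.mem_piFinset.mp hm i
      linarith [sInf_le_sSup_cube d k C f hf m hm']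
    nlinarith [pow_pos (by norm_num : (0:ℝ) < 2) (d * k)]
  have hstep : ∀ k, (Nvisited d C f k : ℝ≥0∞) / 2 ^ ((d + 1) * k) ≤
      ENNReal.ofReal (2 * ((2:ℝ) ^ k)⁻¹) +
        ENNReal.ofReal (1 / C) * ENNReal.ofReal (Iplus d f k - Iminus d f k) := by
    intro k
    have h2k : (0:ℝ) < 2 ^ k := by positivity
    have hdk : (0:ℝ) < 2 ^ (d * k) := by positivity
    have hreal : (Nvisited d C f k : ℝ) / 2 ^ ((d + 1) * k) ≤
        2 * ((2:ℝ) ^ k)⁻¹ + (1 / C) * (Iplus d f k - Iminus d f k) := by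
      rw [div_le_iff₀ (by positivity)]
      have hmain := Nk_real_bound d k C hC f hf
      have hpow : ((2:ℝ)) ^ ((d + 1) * k) = 2 ^ (d * k) * 2 ^ k := by
        rw [add_mul, pow_add, one_mul]
      rw [hpow]
      calc (Nvisited d C f k : ℝ)
          ≤ 2 * 2 ^ (d * k) + 2 ^ k / C * (2 ^ (d * k) * (Iplus d f k - Iminus d f k)) := hmain
        _ = (2 * ((2:ℝ) ^ k)⁻¹ + 1 / C * (Iplus d f k - Iminus d f k)) *
              (2 ^ (d * k) * 2 ^ k) := by
            field_simp
    have hl : (Nvisited d C f k : ℝ≥0∞) / 2 ^ ((d + 1) * k) =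
        ENNReal.ofReal ((Nvisited d C f k : ℝ) / 2 ^ ((d + 1) * k)) := by
      rw [ENNReal.ofReal_div_of_pos (by positivity), ENNReal.ofReal_natCast]
      congr 1
      rw [ENNReal.ofReal_pow (by norm_num)]
      norm_num
    rw [hl]
    calc ENNReal.ofReal ((Nvisited d C f k : ℝ) / 2 ^ ((d + 1) * k))
        ≤ ENNReal.ofReal (2 * ((2:ℝ) ^ k)⁻¹ + (1 / C) * (Iplus d f k - Iminus d f k)) :=
          ENNReal.ofReal_le_ofReal hreal
      _ = ENNReal.ofReal (2 * ((2:ℝ) ^ k)⁻¹) +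
            ENNReal.ofReal ((1 / C) * (Iplus d f k - Iminus d f k)) :=
          ENNReal.ofReal_add (by positivity) (mul_nonneg (by positivity) (hgap k))
      _ = ENNReal.ofReal (2 * ((2:ℝ) ^ k)⁻¹) +
            ENNReal.ofReal (1 / C) * ENNReal.ofReal (Iplus d f k - Iminus d f k) := by
          congr 1
          rw [ENNReal.ofReal_mul (by positivity)]
  have hgeo : ∑' k : ℕ, ENNReal.ofReal (2 * ((2:ℝ) ^ k)⁻¹) = 4 := by
    have h1 : ∀ k : ℕ, ENNReal.ofReal (2 * ((2:ℝ) ^ k)⁻¹) = 2 * (2⁻¹ : ℝ≥0∞) ^ k := by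
      intro k
      rw [ENNReal.ofReal_mul (by norm_num), ← inv_pow, ENNReal.ofReal_pow (by norm_num),
        ENNReal.ofReal_inv_of_pos (by norm_num)]
      norm_num
    simp only [h1]
    rw [ENNReal.tsum_mul_left, ENNReal.tsum_geometric, ENNReal.one_sub_inv_two, inv_inv]
    norm_num
  calc ∑' k : ℕ, (Nvisited d C f k : ℝ≥0∞) / 2 ^ ((d + 1) * k)
      ≤ ∑' k : ℕ, (ENNReal.ofReal (2 * ((2:ℝ) ^ k)⁻¹) +
          ENNReal.ofReal (1 / C) * ENNReal.ofReal (Iplus d f k - Iminus d f k)) :=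
        ENNReal.tsum_le_tsum hstep
    _ = (∑' k : ℕ, ENNReal.ofReal (2 * ((2:ℝ) ^ k)⁻¹)) +
          ∑' k : ℕ, ENNReal.ofReal (1 / C) * ENNReal.ofReal (Iplus d f k - Iminus d f k) :=
        ENNReal.tsum_add
    _ = 4 + ENNReal.ofReal (1 / C) * ∑' k : ℕ, ENNReal.ofReal (Iplus d f k - Iminus d f k) := by
        rw [hgeo, ENNReal.tsum_mul_left]
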